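/- Every complete bipartite graph can be drawn as a witness Gabriel graph: for all integers m, n ≥ 1 there exist a finite set P ⊆ ℝ², a finite set W ⊆ ℝ², and a coloring c : P → Fin 2 with |c⁻¹(0)| = m and |c⁻¹(1)| = n, such that distinct a, b ∈ P are adjacent in GG⁻(P,W) if and only if c(a) ≠ c(b). -/
import Mathlib


open scoped RealInnerProductSpace

noncomputable section

/-- The Euclidean plane. -/
abbrev Pt := EuclideanSpace ℝ (Fin 2)

/-- The closed disk with diameter `ab`. -/
def diskD (a b : Pt) : Set Pt := Metric.closedBall (midpoint ℝ a b) (dist a b / 2)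

/-- `a` and `b` are adjacent in the witness Gabriel graph with witness set `W`. -/
def gabrielEdge (W : Set Pt) (a b : Pt) : Prop := (diskD a b \ {a, b}) ∩ W = ∅

/-- General position: no three points collinear, no four points concyclic. -/
def GenPos (S : Set Pt) : Prop :=
  (∀ a ∈ S, ∀ b ∈ S, ∀ c ∈ S, a ≠ b → a ≠ c → b ≠ c → ¬ Collinear ℝ ({a, b, c} : Set Pt)) ∧
  (∀ a ∈ S, ∀ b ∈ S, ∀ c ∈ S, ∀ d ∈ S, a ≠ b → a ≠ c → a ≠ d → b ≠ c → b ≠ d → c ≠ d →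
    ¬ EuclideanGeometry.Cospherical ({a, b, c, d} : Set Pt))

/-- Planar determinant `u₁v₂ − u₂v₁`. -/
def det2 (u v : Pt) : ℝ := u 0 * v 1 - u 1 * v 0

/-- Counterclockwise convex position. -/
def CCWConvexPos {m : ℕ} (q : Fin m → Pt) : Prop :=
  ∀ i j k : Fin m, i < j → j < k → 0 < det2 (q j - q i) (q k - q i)

/-- Cyclic successor in `Fin m`. -/
def cyclicSucc {m : ℕ} (hm : 0 < m) (i : Fin m) : Fin m :=
  ⟨((i : ℕ) + 1) % m, Nat.mod_lt _ hm⟩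

def pt (x y : ℝ) : Pt := (WithLp.equiv 2 (Fin 2 → ℝ)).symm ![x, y]
lemma pt0 (x y : ℝ) : pt x y 0 = x := rfl
lemma pt1 (x y : ℝ) : pt x y 1 = y := rfl

lemma mem_diskD_iff (a b x : Pt) :
    x ∈ diskD a b ↔ (x 0 - a 0) * (x 0 - b 0) + (x 1 - a 1) * (x 1 - b 1) ≤ 0 := by
  rw [diskD, Metric.mem_closedBall, ← pow_le_pow_iff_left₀ dist_nonneg (by positivity) two_ne_zero]
  rw [div_pow, EuclideanSpace.dist_eq, EuclideanSpace.dist_eq, Real.sq_sqrt (by positivity),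
    Real.sq_sqrt (by positivity), Fin.sum_univ_two, Fin.sum_univ_two]
  have h0 : midpoint ℝ a b 0 = (a 0 + b 0)/2 := by
    rw [midpoint_eq_smul_add]; simp; ring
  have h1 : midpoint ℝ a b 1 = (a 1 + b 1)/2 := by
    rw [midpoint_eq_smul_add]; simp; ring
  rw [h0, h1]
  simp only [Real.dist_eq, sq_abs]
  constructor <;> intro h <;> nlinarith [h]

lemma gabrielEdge_comm (W : Set Pt) (a b : Pt) : gabrielEdge W a b ↔ gabrielEdge W b a := by
  unfold gabrielEdge diskD
  rw [midpoint_comm, dist_comm, Set.pair_comm]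

local instance : DecidableEq Pt := Classical.decEq _

def Lv (m n : ℕ) : ℝ := 8 * ((m:ℝ) + n)^2
def ptA (i : ℕ) : Pt := pt 0 ((i:ℝ)+1)
def ptB (L : ℝ) (j : ℕ) : Pt := pt L ((j:ℝ)+1)
def wA (p : ℕ × ℕ) : Pt := pt (-(((p.2:ℝ) - p.1)/4)) (((p.1:ℝ) + p.2 + 2)/2)
def wB (L : ℝ) (p : ℕ × ℕ) : Pt := pt (L + ((p.2:ℝ) - p.1)/4) (((p.1:ℝ) + p.2 + 2)/2)
def SAs (m : ℕ) : Finset (ℕ × ℕ) := (Finset.range m ×ˢ Finset.range m).filter (fun p => p.1 < p.2)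
def Wset (m n : ℕ) : Finset Pt := (SAs m).image wA ∪ (SAs n).image (wB (Lv m n))
def Pset (m n : ℕ) : Finset Pt :=
  (Finset.range m).image ptA ∪ (Finset.range n).image (ptB (Lv m n))

lemma arith1 (mR nR q1 q2 iR jR : ℝ) (h2 : q1 + 1 ≤ q2) (h3 : q2 + 1 ≤ mR)
    (h1 : 0 ≤ q1) (h4 : 0 ≤ iR) (h5 : iR + 1 ≤ mR) (h6 : 0 ≤ jR) (h7 : jR + 1 ≤ nR)
    (hm : 1 ≤ mR) (hn : 1 ≤ nR) :
    0 < (-((q2 - q1)/4) - 0) * (-((q2 - q1)/4) - 8*(mR+nR)^2)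
      + ((q1+q2+2)/2 - (iR+1)) * ((q1+q2+2)/2 - (jR+1)) := by
  set N := mR + nR with hN
  set u := (q2 - q1)/4 with hu
  set v := (q1+q2+2)/2 with hv
  have hu4 : 1/4 ≤ u := by rw [hu]; linarith
  have hN2 : 2 ≤ N := by linarith
  have b1 : v - (iR+1) ≤ N := by rw [hv, hN]; linarith
  have b2 : -N ≤ v - (iR+1) := by rw [hv, hN]; linarith
  have b3 : v - (jR+1) ≤ N := by rw [hv, hN]; linarith
  have b4 : -N ≤ v - (jR+1) := by rw [hv, hN]; linarith
  have hprod : -(N^2) ≤ (v - (iR+1)) * (v - (jR+1)) := by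
    nlinarith [mul_nonneg (by linarith : (0:ℝ) ≤ N - (v - (iR+1))) (by linarith : (0:ℝ) ≤ N - (v - (jR+1))),
      mul_nonneg (by linarith : (0:ℝ) ≤ N + (v - (iR+1))) (by linarith : (0:ℝ) ≤ N + (v - (jR+1)))]
  have huL : 2*N^2 ≤ u * (8*N^2) := by
    nlinarith [mul_nonneg (by linarith : (0:ℝ) ≤ u - 1/4) (by positivity : (0:ℝ) ≤ 8*N^2)]
  nlinarith [sq_nonneg u, sq_nonneg N, hN2]

lemma arith2 (mR nR q1 q2 iR jR : ℝ) (h2 : q1 + 1 ≤ q2) (h3 : q2 + 1 ≤ nR)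
    (h1 : 0 ≤ q1) (h4 : 0 ≤ iR) (h5 : iR + 1 ≤ mR) (h6 : 0 ≤ jR) (h7 : jR + 1 ≤ nR)
    (hm : 1 ≤ mR) (hn : 1 ≤ nR) :
    0 < (8*(mR+nR)^2 + (q2 - q1)/4 - 0) * (8*(mR+nR)^2 + (q2 - q1)/4 - 8*(mR+nR)^2)
      + ((q1+q2+2)/2 - (iR+1)) * ((q1+q2+2)/2 - (jR+1)) := by
  set N := mR + nR with hN
  set u := (q2 - q1)/4 with hu
  set v := (q1+q2+2)/2 with hv
  have hu4 : 1/4 ≤ u := by rw [hu]; linarith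
  have hN2 : 2 ≤ N := by linarith
  have b1 : v - (iR+1) ≤ N := by rw [hv, hN]; linarith
  have b2 : -N ≤ v - (iR+1) := by rw [hv, hN]; linarith
  have b3 : v - (jR+1) ≤ N := by rw [hv, hN]; linarith
  have b4 : -N ≤ v - (jR+1) := by rw [hv, hN]; linarith
  have hprod : -(N^2) ≤ (v - (iR+1)) * (v - (jR+1)) := by
    nlinarith [mul_nonneg (by linarith : (0:ℝ) ≤ N - (v - (iR+1))) (by linarith : (0:ℝ) ≤ N - (v - (jR+1))),
      mul_nonneg (by linarith : (0:ℝ) ≤ N + (v - (iR+1))) (by linarith : (0:ℝ) ≤ N + (v - (jR+1)))]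
  have huL : 2*N^2 ≤ u * (8*N^2) := by
    nlinarith [mul_nonneg (by linarith : (0:ℝ) ≤ u - 1/4) (by positivity : (0:ℝ) ≤ 8*N^2)]
  nlinarith [sq_nonneg u, sq_nonneg N, hN2]

lemma w_notin_cross (m n : ℕ) (hm : 1 ≤ m) (hn : 1 ≤ n) (i j : ℕ) (hi : i < m) (hj : j < n) :
    ∀ w ∈ Wset m n, w ∉ diskD (ptA i) (ptB (Lv m n) j) := by
  intro w hw
  rw [Wset, Finset.mem_union] at hw
  have hmR : (1:ℝ) ≤ m := by exact_mod_cast hm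
  have hnR : (1:ℝ) ≤ n := by exact_mod_cast hn
  have hiR : (i:ℝ) + 1 ≤ m := by exact_mod_cast hi
  have hjR : (j:ℝ) + 1 ≤ n := by exact_mod_cast hj
  rcases hw with hw | hw <;> obtain ⟨p, hp, rfl⟩ := Finset.mem_image.mp hw <;>
    rw [SAs, Finset.mem_filter, Finset.mem_product, Finset.mem_range, Finset.mem_range] at hp <;>
    obtain ⟨⟨hp1, hp2⟩, hp3⟩ := hp <;>
    have hq : (p.1:ℝ) + 1 ≤ p.2 := by exact_mod_cast hp3
  · have hq2 : (p.2:ℝ) + 1 ≤ m := by exact_mod_cast hp2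
    simp only [mem_diskD_iff, wA, ptA, ptB, pt0, pt1, Lv, not_le]
    linarith [arith1 m n p.1 p.2 i j hq hq2 (by positivity) (by positivity) hiR (by positivity) hjR hmR hnR]
  · have hq2 : (p.2:ℝ) + 1 ≤ n := by exact_mod_cast hp2
    simp only [mem_diskD_iff, wB, ptA, ptB, pt0, pt1, Lv, not_le]
    linarith [arith2 m n p.1 p.2 i j hq hq2 (by positivity) (by positivity) hiR (by positivity) hjR hmR hnR]

lemma edge_cross (m n : ℕ) (hm : 1 ≤ m) (hn : 1 ≤ n) (i j : ℕ) (hi : i < m) (hj : j < n) :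
    gabrielEdge (Wset m n) (ptA i) (ptB (Lv m n) j) := by
  rw [gabrielEdge, Set.eq_empty_iff_forall_notMem]
  rintro w ⟨⟨hwd, -⟩, hwW⟩
  exact w_notin_cross m n hm hn i j hi hj w (Finset.mem_coe.mp hwW) hwd

lemma not_edge_A (m n : ℕ) (q1 q2 : ℕ) (h1 : q1 < q2) (h2 : q2 < m) :
    ¬ gabrielEdge (Wset m n) (ptA q1) (ptA q2) := by
  intro h
  rw [gabrielEdge, Set.eq_empty_iff_forall_notMem] at h
  apply h (wA (q1, q2))
  have hq : (q1:ℝ) + 1 ≤ q2 := by exact_mod_cast h1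
  refine ⟨⟨?_, ?_⟩, ?_⟩
  · simp only [mem_diskD_iff, wA, ptA, pt0, pt1]
    nlinarith [sq_nonneg ((q2:ℝ) - q1)]
  · simp only [Set.mem_insert_iff, Set.mem_singleton_iff, not_or]
    constructor <;> intro heq <;>
      · have h0 := congrArg (fun p : Pt => p 0) heq
        simp only [wA, ptA, pt0] at h0
        linarith
  · refine Finset.mem_coe.mpr (Finset.mem_union.mpr (Or.inl (Finset.mem_image.mpr ⟨(q1,q2), ?_, rfl⟩)))
    simp only [SAs, Finset.mem_filter, Finset.mem_product, Finset.mem_range]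
    exact ⟨⟨h1.trans h2, h2⟩, h1⟩

lemma not_edge_B (m n : ℕ) (q1 q2 : ℕ) (h1 : q1 < q2) (h2 : q2 < n) :
    ¬ gabrielEdge (Wset m n) (ptB (Lv m n) q1) (ptB (Lv m n) q2) := by
  intro h
  rw [gabrielEdge, Set.eq_empty_iff_forall_notMem] at h
  apply h (wB (Lv m n) (q1, q2))
  have hq : (q1:ℝ) + 1 ≤ q2 := by exact_mod_cast h1
  refine ⟨⟨?_, ?_⟩, ?_⟩
  · simp only [mem_diskD_iff, wB, ptB, pt0, pt1]
    nlinarith [sq_nonneg ((q2:ℝ) - q1)]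
  · simp only [Set.mem_insert_iff, Set.mem_singleton_iff, not_or]
    constructor <;> intro heq <;>
      · have h0 := congrArg (fun p : Pt => p 0) heq
        simp only [wB, ptB, pt0] at h0
        linarith
  · refine Finset.mem_coe.mpr (Finset.mem_union.mpr (Or.inr (Finset.mem_image.mpr ⟨(q1,q2), ?_, rfl⟩)))
    simp only [SAs, Finset.mem_filter, Finset.mem_product, Finset.mem_range]
    exact ⟨⟨h1.trans h2, h2⟩, h1⟩

/-- Every complete bipartite graph `K_{m,n}` can be drawn as a witness
Gabriel graph. -/
theorem complete_bipartite_witness_gabriel_drawable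
    (m n : ℕ) (hm : 1 ≤ m) (hn : 1 ≤ n) :
    ∃ (P W : Finset Pt) (c : Pt → Fin 2),
      (P.filter (fun p => c p = 0)).card = m ∧
      (P.filter (fun p => c p = 1)).card = n ∧
      ∀ a ∈ P, ∀ b ∈ P, a ≠ b →
        (gabrielEdge (W : Set Pt) a b ↔ c a ≠ c b) := by

  have hmR : (1:ℝ) ≤ m := by exact_mod_cast hm
  have hnR : (1:ℝ) ≤ n := by exact_mod_cast hn
  have hL : 0 < Lv m n := by rw [Lv]; nlinarith
  refine ⟨Pset m n, Wset m n, fun p => if p 0 = 0 then 0 else 1, ?_, ?_, ?_⟩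
  all_goals
    have hcA : ∀ i : ℕ, (if (ptA i) 0 = (0:ℝ) then (0:Fin 2) else 1) = 0 := fun i => if_pos rfl
    have hcB : ∀ j : ℕ, (if (ptB (Lv m n) j) 0 = (0:ℝ) then (0:Fin 2) else 1) = 1 :=
      fun j => if_neg (ne_of_gt hL)
    have hAinj : Function.Injective ptA := by
      intro i i' h
      have h1 := congrArg (fun p : Pt => p 1) h
      simp only [ptA, pt1] at h1
      have : (i:ℝ) = i' := by linarith
      exact_mod_cast this
    have hBinj : Function.Injective (ptB (Lv m n)) := by
      intro i i' h
      have h1 := congrArg (fun p : Pt => p 1) h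
      simp only [ptB, pt1] at h1
      have : (i:ℝ) = i' := by linarith
      exact_mod_cast this
  · have hfil : (Pset m n).filter (fun p => (if p 0 = (0:ℝ) then (0:Fin 2) else 1) = 0)
        = (Finset.range m).image ptA := by
      ext p
      simp only [Finset.mem_filter, Pset, Finset.mem_union, Finset.mem_image, Finset.mem_range]
      constructor
      · rintro ⟨h | h, hc⟩
        · exact h
        · obtain ⟨j, hj, rfl⟩ := h
          rw [hcB j] at hc
          exact absurd hc (by decide)
      · rintro ⟨i, hi, rfl⟩
        exact ⟨Or.inl ⟨i, hi, rfl⟩, hcA i⟩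
    rw [hfil, Finset.card_image_of_injective _ hAinj, Finset.card_range]
  · have hfil : (Pset m n).filter (fun p => (if p 0 = (0:ℝ) then (0:Fin 2) else 1) = 1)
        = (Finset.range n).image (ptB (Lv m n)) := by
      ext p
      simp only [Finset.mem_filter, Pset, Finset.mem_union, Finset.mem_image, Finset.mem_range]
      constructor
      · rintro ⟨h | h, hc⟩
        · obtain ⟨i, hi, rfl⟩ := h
          rw [hcA i] at hc
          exact absurd hc (by decide)
        · exact h
      · rintro ⟨j, hj, rfl⟩
        exact ⟨Or.inr ⟨j, hj, rfl⟩, hcB j⟩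
    rw [hfil, Finset.card_image_of_injective _ hBinj, Finset.card_range]
  · intro a ha b hb hab
    simp only [Pset, Finset.mem_union, Finset.mem_image, Finset.mem_range] at ha hb
    rcases ha with ⟨i, hi, rfl⟩ | ⟨i, hi, rfl⟩ <;> rcases hb with ⟨j, hj, rfl⟩ | ⟨j, hj, rfl⟩
    · refine iff_of_false ?_ (by simp only [hcA i, hcA j]; simp)
      have hij : i ≠ j := fun e => hab (by rw [e])
      rcases hij.lt_or_gt with h | h
      · exact not_edge_A m n i j h hj
      · exact fun he => not_edge_A m n j i h hi ((gabrielEdge_comm _ _ _).mp he)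
    · exact iff_of_true (edge_cross m n hm hn i j hi hj)
        (by simp only [hcA i, hcB j]; decide)
    · exact iff_of_true ((gabrielEdge_comm _ _ _).mpr (edge_cross m n hm hn j i hj hi))
        (by simp only [hcA j, hcB i]; decide)
    · refine iff_of_false ?_ (by simp only [hcB i, hcB j]; simp)
      have hij : i ≠ j := fun e => hab (by rw [e])
      rcases hij.lt_or_gt with h | h
      · exact not_edge_B m n i j h hj
      · exact fun he => not_edge_B m n j i h hi ((gabrielEdge_comm _ _ _).mp he)
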